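/- Let a and b be real numbers with b − a > 4 (equivalently γ̂_G = (b−a)/2 > 2). Then the midpoint w = (a+b)/2 is a local maximum of the two-client MaxFL objective v(w) = (1/2)σ((w−a)²) + (1/2)σ((w−b)²); in particular v'((a+b)/2) = 0 and v''((a+b)/2) < 0. -/

import Mathlib

open Filter Set Topology

noncomputable def sigmoid (x : ℝ) : ℝ := 1 / (1 + Real.exp (-x))

noncomputable def S' (x : ℝ) : ℝ := Real.exp (-x) / (1 + Real.exp (-x)) ^ 2

noncomputable def S'' (x : ℝ) : ℝ :=
  -Real.exp (-x) / (1 + Real.exp (-x)) ^ 2 +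
    Real.exp (-x) * (2 * (1 + Real.exp (-x)) * Real.exp (-x) / ((1 + Real.exp (-x)) ^ 2) ^ 2)

noncomputable def Dv (a b w : ℝ) : ℝ :=
  1 / 2 * (S' ((w - a) ^ 2) * (2 * (w - a))) + 1 / 2 * (S' ((w - b) ^ 2) * (2 * (w - b)))

noncomputable def Ev (a b w : ℝ) : ℝ :=
  1 / 2 * (S'' ((w - a) ^ 2) * (2 * (w - a)) * (2 * (w - a)) + S' ((w - a) ^ 2) * 2) +
    1 / 2 * (S'' ((w - b) ^ 2) * (2 * (w - b)) * (2 * (w - b)) + S' ((w - b) ^ 2) * 2)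

lemma exp_pos' (x : ℝ) : (0:ℝ) < 1 + Real.exp (-x) := by positivity

lemma base_hasDerivAt (x : ℝ) :
    HasDerivAt (fun x : ℝ => 1 + Real.exp (-x)) (-Real.exp (-x)) x := by
  have h : HasDerivAt (fun x : ℝ => Real.exp (-x)) (-Real.exp (-x)) x := by
    simpa [Function.comp_def] using ((Real.hasDerivAt_exp (-x)).comp x (hasDerivAt_neg x))
  simpa using h.const_add 1

lemma sigmoid_hasDerivAt (x : ℝ) : HasDerivAt sigmoid (S' x) x := by
  have h := (base_hasDerivAt x).fun_inv (ne_of_gt (exp_pos' x))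
  have : (fun x : ℝ => (1 + Real.exp (-x))⁻¹) = sigmoid := by
    funext y; simp [sigmoid, one_div]
  rw [this] at h
  simpa [S', neg_div] using h

lemma S'_hasDerivAt (x : ℝ) : HasDerivAt S' (S'' x) x := by
  have h1 : HasDerivAt (fun x : ℝ => Real.exp (-x)) (-Real.exp (-x)) x := by
    simpa [Function.comp_def] using ((Real.hasDerivAt_exp (-x)).comp x (hasDerivAt_neg x))
  have h2 : HasDerivAt (fun x : ℝ => (1 + Real.exp (-x)) ^ 2)
      (2 * (1 + Real.exp (-x)) ^ 1 * (-Real.exp (-x))) x := by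
    simpa using (base_hasDerivAt x).fun_pow 2
  have h3 := h2.fun_inv (by positivity)
  have h4 := h1.fun_mul h3
  have : (fun x : ℝ => Real.exp (-x) * ((1 + Real.exp (-x)) ^ 2)⁻¹) = S' := by
    funext y; simp [S', div_eq_mul_inv]
  rw [this] at h4
  refine h4.congr_deriv ?_
  unfold S''
  field_simp

lemma sq_hasDerivAt (p w : ℝ) : HasDerivAt (fun w : ℝ => (w - p) ^ 2) (2 * (w - p)) w := by
  simpa using ((hasDerivAt_id w).sub_const p).fun_pow 2

lemma v_hasDerivAt (a b w : ℝ) :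
    HasDerivAt (fun w : ℝ => (1 / 2) * sigmoid ((w - a) ^ 2) + (1 / 2) * sigmoid ((w - b) ^ 2))
      (Dv a b w) w := by
  have ha := ((sigmoid_hasDerivAt ((w - a) ^ 2)).comp w (sq_hasDerivAt a w)).const_mul (1/2 : ℝ)
  have hb := ((sigmoid_hasDerivAt ((w - b) ^ 2)).comp w (sq_hasDerivAt b w)).const_mul (1/2 : ℝ)
  exact ha.add hb

lemma D_hasDerivAt (a b w : ℝ) : HasDerivAt (Dv a b) (Ev a b w) w := by
  have h2 : ∀ p : ℝ, HasDerivAt (fun w : ℝ => 2 * (w - p)) 2 w := fun p => by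
    simpa using ((hasDerivAt_id w).sub_const p).const_mul (2:ℝ)
  have ha := (((S'_hasDerivAt ((w - a) ^ 2)).comp w (sq_hasDerivAt a w)).mul (h2 a)).const_mul
    (1/2 : ℝ)
  have hb := (((S'_hasDerivAt ((w - b) ^ 2)).comp w (sq_hasDerivAt b w)).mul (h2 b)).const_mul
    (1/2 : ℝ)
  exact ha.add hb

lemma key_ineq {c : ℝ} (hc : 2 < c) : 4 * c ^ 2 * S'' (c ^ 2) + 2 * S' (c ^ 2) < 0 := by
  set u := Real.exp (-c ^ 2) with hu
  have hu0 : 0 < u := Real.exp_pos _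
  have hp : 0 < 1 + u := by positivity
  have hc2 : 4 < c ^ 2 := by nlinarith
  have hu1 : u < 1 / 50 := by
    have h4 : Real.exp (-c ^ 2) ≤ Real.exp (-4) := Real.exp_le_exp.mpr (by linarith)
    have h50 : (50:ℝ) < Real.exp 4 := by
      have h1 := Real.exp_one_gt_d9
      have he : Real.exp 4 = (Real.exp 1) ^ 4 := by
        rw [← Real.exp_nat_mul]; norm_num
      have hb4 : (2.7182818283:ℝ) ^ 4 > 50 := by norm_num
      have := pow_lt_pow_left₀ h1 (by norm_num : (0:ℝ) ≤ 2.7182818283) (by norm_num : 4 ≠ 0)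
      rw [he]; linarith
    have : Real.exp (-4) < 1 / 50 := by
      rw [Real.exp_neg]
      rw [inv_lt_comm₀ (by positivity) (by norm_num)]
      simpa using h50
    linarith [hu ▸ h4]
  have hbr : (1 + u) - 2 * c ^ 2 * (1 - u) < 0 := by nlinarith
  have heq : 4 * c ^ 2 * S'' (c ^ 2) + 2 * S' (c ^ 2) =
      2 * u / (1 + u) ^ 3 * ((1 + u) - 2 * c ^ 2 * (1 - u)) := by
    unfold S'' S'
    rw [← hu]
    field_simp
    ring
  rw [heq]
  exact mul_neg_of_pos_of_neg (by positivity) hbr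

theorem midpoint_local_max (a b : ℝ) (hab : b - a > 4) :
    IsLocalMax (fun w : ℝ => (1 / 2) * sigmoid ((w - a) ^ 2) + (1 / 2) * sigmoid ((w - b) ^ 2))
      ((a + b) / 2) ∧
    deriv (fun w : ℝ => (1 / 2) * sigmoid ((w - a) ^ 2) + (1 / 2) * sigmoid ((w - b) ^ 2))
      ((a + b) / 2) = 0 ∧
    deriv (deriv (fun w : ℝ =>
        (1 / 2) * sigmoid ((w - a) ^ 2) + (1 / 2) * sigmoid ((w - b) ^ 2)))
      ((a + b) / 2) < 0 := by
  set v := fun w : ℝ => (1 / 2) * sigmoid ((w - a) ^ 2) + (1 / 2) * sigmoid ((w - b) ^ 2) with hv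
  set m := (a + b) / 2 with hm
  have hderiv : deriv v = Dv a b := funext fun w => (v_hasDerivAt a b w).deriv
  have hsq : (m - b) ^ 2 = (m - a) ^ 2 := by rw [hm]; ring
  have hD0 : Dv a b m = 0 := by
    unfold Dv
    rw [hsq, hm]
    ring
  set c := (b - a) / 2 with hc
  have hc2 : 2 < c := by rw [hc]; linarith
  have h1 : m - a = c := by rw [hm, hc]; ring
  have h2 : m - b = -c := by rw [hm, hc]; ring
  have hEm : Ev a b m < 0 := by
    have hkey := key_ineq hc2
    have : Ev a b m = 4 * c ^ 2 * S'' (c ^ 2) + 2 * S' (c ^ 2) := by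
      unfold Ev
      rw [h1, h2, neg_sq]
      ring
    rw [this]
    exact hkey
  have hderiv2 : deriv (deriv v) m = Ev a b m := by
    rw [hderiv]
    exact (D_hasDerivAt a b m).deriv
  have hcont : ContinuousAt v m := (v_hasDerivAt a b m).differentiableAt.continuousAt
  have hslope : Tendsto (slope (Dv a b) m) (𝓝[≠] m) (𝓝 (Ev a b m)) :=
    hasDerivAt_iff_tendsto_slope.mp (D_hasDerivAt a b m)
  have hev : ∀ᶠ y in 𝓝[≠] m, slope (Dv a b) m y < 0 := hslope.eventually_lt_const hEm
  have hslope_eq : ∀ y : ℝ, slope (Dv a b) m y = Dv a b y / (y - m) := by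
    intro y; rw [slope_def_field, hD0, sub_zero]
  have hl : ∀ᶠ y in 𝓝[<] m, 0 ≤ deriv v y := by
    rw [hderiv]
    filter_upwards [hev.filter_mono (nhdsLT_le_nhdsNE m), self_mem_nhdsWithin] with y hy hy'
    rw [hslope_eq y] at hy
    rcases div_neg_iff.mp hy with ⟨h, h'⟩ | ⟨h, h'⟩
    · linarith
    · exact absurd hy' (by simp only [mem_Iio]; linarith)
  have hr : ∀ᶠ y in 𝓝[>] m, deriv v y ≤ 0 := by
    rw [hderiv]
    filter_upwards [hev.filter_mono (nhdsGT_le_nhdsNE m), self_mem_nhdsWithin] with y hy hy'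
    rw [hslope_eq y] at hy
    rcases div_neg_iff.mp hy with ⟨h, h'⟩ | ⟨h, h'⟩
    · exact absurd hy' (by simp only [mem_Ioi]; linarith)
    · linarith
  refine ⟨?_, ?_, ?_⟩
  · exact isLocalMax_of_deriv' hcont
      (Eventually.of_forall fun x => (v_hasDerivAt a b x).differentiableAt)
      (Eventually.of_forall fun x => (v_hasDerivAt a b x).differentiableAt) hl hr
  · rw [hderiv]; exact hD0
  · rw [hderiv2]; exact hEm
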